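/- Let Λ_{ε,γ} be the map on N×N matrices with Λ(ρ)_{μμ} = (1−ε)ρ_{μμ} + (ε/(N−1)) Σ_{ν≠μ} ρ_{νν}, Λ(ρ)_{μν} = (1+α)ρ_{μν} + γ·(conjugate-partner coupling) for μ≠ν as in the faulty-aQNN model. If α ∈ [(ε−N)/(N−1), −ε] and |γ| ≤ ε/(N−1), then the Choi matrix of Λ_{ε,γ} is positive semidefinite and Λ_{ε,γ} is trace preserving; hence Λ_{ε,γ} is CPTP. -/

import Mathlib

open Matrix BigOperators ComplexOrder

/-- The faulty dephasing map `Λ_{ε,γ}`: diagonal entries suffer a depolarizing-type error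
`ρ_{μμ} ↦ (1-ε)ρ_{μμ} + (ε/(N-1)) ∑_{ν≠μ} ρ_{νν}`, and off-diagonal entries get
`ρ_{μν} ↦ (1+α)ρ_{μν} + γ ρ_{νμ}`-type coupling (with `γ̄` for `μ < ν`, `γ` for `ν < μ`). -/
noncomputable def faultyMap {N : ℕ} (ε α : ℝ) (γ : ℂ)
    (ρ : Matrix (Fin N) (Fin N) ℂ) : Matrix (Fin N) (Fin N) ℂ :=
  Matrix.of fun μ ν =>
    if μ = ν then
      ((1 - ε : ℝ) : ℂ) * ρ μ μ +
        ((ε / ((N : ℝ) - 1) : ℝ) : ℂ) * ∑ ν' ∈ Finset.univ.filter (· ≠ μ), ρ ν' ν'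
    else if μ < ν then (1 + (α : ℂ)) * ρ μ ν + (starRingEnd ℂ) γ * ρ ν μ
    else (1 + (α : ℂ)) * ρ μ ν + γ * ρ ν μ

/-- The Choi matrix `J_Λ = ∑_{μν} |μ⟩⟨ν| ⊗ Λ(|μ⟩⟨ν|)` of a map. -/
noncomputable def choiMatrix {N : ℕ} (Λ : Matrix (Fin N) (Fin N) ℂ → Matrix (Fin N) (Fin N) ℂ) :
    Matrix (Fin N × Fin N) (Fin N × Fin N) ℂ :=
  Matrix.of fun p q => (Λ (Matrix.single p.1 q.1 1)) p.2 q.2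

lemma std_filter_sum {N : ℕ} (μ ν a : Fin N) :
    ∑ ν' ∈ Finset.univ.filter (· ≠ a), (Matrix.single μ ν (1:ℂ)) ν' ν'
      = if μ = ν ∧ μ ≠ a then 1 else 0 := by
  simp only [Matrix.single, Matrix.of_apply]
  by_cases h : μ = ν
  · subst h
    simp only [and_self]
    rw [Finset.sum_ite_eq]
    simp [Finset.mem_filter]
  · rw [Finset.sum_eq_zero, if_neg (by tauto)]
    intro x hx
    rw [if_neg (by rintro ⟨rfl, rfl⟩; exact h rfl)]

lemma choi_apply {N : ℕ} (ε α : ℝ) (γ : ℂ) (p q : Fin N × Fin N) :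
    choiMatrix (faultyMap ε α γ) p q =
      (if p = q then (if p.1 = p.2 then ((1 - ε : ℝ) : ℂ) else ((ε / ((N:ℝ)-1) : ℝ) : ℂ)) else 0)
      + (if p.1 = p.2 ∧ q.1 = q.2 ∧ p ≠ q then (1 + (α:ℂ)) else 0)
      + (if q = (p.2, p.1) ∧ p.1 ≠ p.2 then (if p.2 < p.1 then (starRingEnd ℂ) γ else γ) else 0) := by
  obtain ⟨μ, a⟩ := p
  obtain ⟨ν, b⟩ := q
  simp only [choiMatrix, faultyMap, Matrix.of_apply]
  by_cases hab : a = b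
  · subst hab
    rw [if_pos rfl, std_filter_sum]
    simp only [Prod.mk.injEq, Prod.ext_iff, ne_eq]
    by_cases hμν : μ = ν
    · subst hμν
      by_cases hμa : μ = a
      · subst hμa
        simp [Matrix.single]
      · simp [Matrix.single, hμa, Ne.symm hμa]
    · simp only [Matrix.single, Matrix.of_apply]
      have h1 : ¬(μ = a ∧ ν = a) := by rintro ⟨rfl, rfl⟩; exact hμν rfl
      have h2 : ¬(μ = ν ∧ ¬ μ = a) := by tauto
      have h3 : ¬((μ = ν ∧ a = a) ∧ ¬(μ = ν ∧ a = a)) := by tauto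
      have h4 : ¬((ν = a ∧ a = μ) ∧ ¬μ = a) := by
        rintro ⟨⟨rfl, rfl⟩, h⟩; exact hμν rfl
      simp [h1, h2, h3, h4, hμν]
  · rw [if_neg hab]
    have hpq : ¬((μ, a) = (ν, b) : Prop) := by
      simp only [Prod.mk.injEq]; tauto
    rw [if_neg hpq]
    simp only [Matrix.single, Matrix.of_apply, Prod.mk.injEq, ne_eq, Prod.ext_iff]
    have hba : ¬ b = a := fun h => hab h.symm
    by_cases c2 : μ = b ∧ ν = a
    · by_cases hlt : a < b <;>
        simp [c2.1, c2.2, hab, hba, hlt, Matrix.single]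
    · by_cases c1 : μ = a ∧ ν = b
      · by_cases hlt : a < b <;>
          simp [c1.1, c1.2, hab, hba, hlt, Matrix.single]
      · have h4 : ¬((ν = a ∧ b = μ) ∧ ¬μ = a) := by
          rintro ⟨⟨rfl, rfl⟩, h⟩; exact c2 ⟨rfl, rfl⟩
        have h1 : ¬(μ = a ∧ ν = b) := c1
        have h2 : ¬(μ = b ∧ ν = a) := c2
        by_cases hlt : a < b <;>
          simp [hab, hba, hlt, h1, h2, h4, Matrix.single]

lemma diag_filter_sum {N : ℕ} (f : Fin N × Fin N → ℂ) :
    ∑ p ∈ Finset.univ.filter (fun p : Fin N × Fin N => p.1 = p.2), f p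
      = ∑ a : Fin N, f (a, a) := by
  rw [show Finset.univ.filter (fun p : Fin N × Fin N => p.1 = p.2)
        = Finset.univ.image (fun a : Fin N => (a, a)) by
      ext ⟨i, j⟩; simp [eq_comm, and_comm]]
  rw [Finset.sum_image (by intro a _ b _ h; exact (Prod.mk.injEq a a b b ▸ h).1)]

lemma offdiag_split {N : ℕ} (f : Fin N × Fin N → ℂ) :
    ∑ p ∈ Finset.univ.filter (fun p : Fin N × Fin N => p.1 ≠ p.2), f p
      = ∑ p ∈ Finset.univ.filter (fun p : Fin N × Fin N => p.2 < p.1), (f p + f (p.2, p.1)) := by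
  have h1 : Finset.univ.filter (fun p : Fin N × Fin N => p.1 ≠ p.2)
      = Finset.univ.filter (fun p : Fin N × Fin N => p.2 < p.1)
        ∪ Finset.univ.filter (fun p : Fin N × Fin N => p.1 < p.2) := by
    ext p
    simp only [Finset.mem_filter, Finset.mem_union, Finset.mem_univ, true_and, ne_eq]
    constructor
    · intro h; rcases lt_or_gt_of_ne h with h' | h'
      · right; exact h'
      · left; exact h'
    · rintro (h | h) <;> intro hc <;> simp [hc] at h <;> exact absurd h (lt_irrefl _)
  have h2 : Disjoint (Finset.univ.filter (fun p : Fin N × Fin N => p.2 < p.1))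
      (Finset.univ.filter (fun p : Fin N × Fin N => p.1 < p.2)) := by
    rw [Finset.disjoint_left]
    intro p hp hq
    simp only [Finset.mem_filter] at hp hq
    exact absurd (hp.2.trans hq.2) (lt_irrefl _)
  rw [h1, Finset.sum_union h2, Finset.sum_add_distrib]
  congr 1
  exact Finset.sum_nbij' (fun p => (p.2, p.1)) (fun p => (p.2, p.1))
    (by intro p hp; simp only [Finset.mem_filter, Finset.mem_univ, true_and] at *; exact hp)
    (by intro p hp; simp only [Finset.mem_filter, Finset.mem_univ, true_and] at *; exact hp)
    (by intro p _; simp) (by intro p _; simp) (by intro p _; rfl)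

lemma quad_form {N : ℕ} (ε α : ℝ) (γ : ℂ) (x : Fin N × Fin N → ℂ) :
    star x ⬝ᵥ (choiMatrix (faultyMap ε α γ) *ᵥ x) =
      (∑ a : Fin N, ((1 - ε : ℝ) : ℂ) * ((starRingEnd ℂ) (x (a,a)) * x (a,a))
      + (1 + (α:ℂ)) * ((∑ a : Fin N, (starRingEnd ℂ) (x (a,a))) * (∑ a : Fin N, x (a,a))
          - ∑ a : Fin N, (starRingEnd ℂ) (x (a,a)) * x (a,a)))
      + ∑ p ∈ Finset.univ.filter (fun p : Fin N × Fin N => p.2 < p.1),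
          ( ((ε / ((N:ℝ)-1) : ℝ) : ℂ) * ((starRingEnd ℂ) (x p) * x p
              + (starRingEnd ℂ) (x (p.2,p.1)) * x (p.2,p.1))
            + ((starRingEnd ℂ) γ * ((starRingEnd ℂ) (x p) * x (p.2,p.1))
              + γ * ((starRingEnd ℂ) (x (p.2,p.1)) * x p)) ) := by
  classical
  set c1 : ℂ := ((1 - ε : ℝ) : ℂ)
  set c2 : ℂ := ((ε / ((N:ℝ)-1) : ℝ) : ℂ)
  have h0 : star x ⬝ᵥ (choiMatrix (faultyMap ε α γ) *ᵥ x)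
      = ∑ p : Fin N × Fin N, ∑ q : Fin N × Fin N,
          ((starRingEnd ℂ) (x p) * ((if p = q then (if p.1 = p.2 then c1 else c2) else 0) * x q)
          + (starRingEnd ℂ) (x p) * ((if p.1 = p.2 ∧ q.1 = q.2 ∧ p ≠ q then (1 + (α:ℂ)) else 0) * x q)
          + (starRingEnd ℂ) (x p) * ((if q = (p.2, p.1) ∧ p.1 ≠ p.2 then (if p.2 < p.1 then (starRingEnd ℂ) γ else γ) else 0) * x q)) := by
    simp only [dotProduct, mulVec, Finset.mul_sum, Pi.star_apply, Complex.star_def]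
    refine Finset.sum_congr rfl fun p _ => Finset.sum_congr rfl fun q _ => ?_
    rw [choi_apply]
    ring
  have hT1 : (∑ p : Fin N × Fin N, ∑ q : Fin N × Fin N,
        (starRingEnd ℂ) (x p) * ((if p = q then (if p.1 = p.2 then c1 else c2) else 0) * x q))
      = ∑ a : Fin N, c1 * ((starRingEnd ℂ) (x (a,a)) * x (a,a))
        + ∑ p ∈ Finset.univ.filter (fun p : Fin N × Fin N => p.2 < p.1),
            c2 * ((starRingEnd ℂ) (x p) * x p + (starRingEnd ℂ) (x (p.2,p.1)) * x (p.2,p.1)) := by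
    have e1 : ∀ p : Fin N × Fin N,
        (∑ q : Fin N × Fin N, (starRingEnd ℂ) (x p) * ((if p = q then (if p.1 = p.2 then c1 else c2) else 0) * x q))
        = (if p.1 = p.2 then c1 else c2) * ((starRingEnd ℂ) (x p) * x p) := by
      intro p
      rw [Finset.sum_eq_single p]
      · simp; ring
      · intro q _ hq; rw [if_neg (fun h => hq h.symm)]; ring
      · intro h; exact absurd (Finset.mem_univ p) h
    rw [Finset.sum_congr rfl fun p _ => e1 p]
    rw [← Finset.sum_filter_add_sum_filter_not Finset.univ (fun p : Fin N × Fin N => p.1 = p.2)]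
    congr 1
    · rw [Finset.sum_congr rfl (fun p hp => by
        rw [if_pos (Finset.mem_filter.mp hp).2]), diag_filter_sum (fun p => c1 * ((starRingEnd ℂ) (x p) * x p))]
    · rw [Finset.sum_congr rfl (fun p hp => by
        rw [if_neg (Finset.mem_filter.mp hp).2])]
      have := offdiag_split (fun p : Fin N × Fin N => c2 * ((starRingEnd ℂ) (x p) * x p))
      simp only [ne_eq] at this
      rw [this]
      exact Finset.sum_congr rfl fun p _ => by ring
  have hT2 : (∑ p : Fin N × Fin N, ∑ q : Fin N × Fin N,
        (starRingEnd ℂ) (x p) * ((if p.1 = p.2 ∧ q.1 = q.2 ∧ p ≠ q then (1 + (α:ℂ)) else 0) * x q))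
      = (1 + (α:ℂ)) * ((∑ a : Fin N, (starRingEnd ℂ) (x (a,a))) * (∑ a : Fin N, x (a,a))
          - ∑ a : Fin N, (starRingEnd ℂ) (x (a,a)) * x (a,a)) := by
    have key : ∀ p q : Fin N × Fin N,
        (starRingEnd ℂ) (x p) * ((if p.1 = p.2 ∧ q.1 = q.2 ∧ p ≠ q then (1 + (α:ℂ)) else 0) * x q)
        = (if p.1 = p.2 then (starRingEnd ℂ) (x p) else 0) * ((1 + (α:ℂ)) * (if q.1 = q.2 then x q else 0))
          - (if p = q then (if p.1 = p.2 then (1 + (α:ℂ)) * ((starRingEnd ℂ) (x p) * x p) else 0) else 0) := by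
      intro p q
      by_cases hpq : p = q
      · subst hpq
        by_cases h1 : p.1 = p.2 <;> simp [h1] <;> ring
      · by_cases h1 : p.1 = p.2 <;> by_cases h2 : q.1 = q.2 <;>
          simp [h1, h2, hpq] <;> ring
    simp only [key, Finset.sum_sub_distrib]
    rw [← Finset.sum_mul_sum]
    have col : (∑ p : Fin N × Fin N, ∑ q : Fin N × Fin N,
        (if p = q then (if p.1 = p.2 then (1 + (α:ℂ)) * ((starRingEnd ℂ) (x p) * x p) else 0) else 0))
        = ∑ p : Fin N × Fin N, (if p.1 = p.2 then (1 + (α:ℂ)) * ((starRingEnd ℂ) (x p) * x p) else 0) := by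
      refine Finset.sum_congr rfl fun p _ => ?_
      rw [Finset.sum_eq_single p]
      · simp
      · intro q _ hq; rw [if_neg (fun h => hq h.symm)]
      · intro h; exact absurd (Finset.mem_univ p) h
    rw [col]
    have e2 : (∑ j : Fin N × Fin N, (1 + (α:ℂ)) * (if j.1 = j.2 then x j else 0))
        = (1+(α:ℂ)) * ∑ a : Fin N, x (a,a) := by
      rw [← Finset.mul_sum, ← Finset.sum_filter, diag_filter_sum]
    have e3 : (∑ i : Fin N × Fin N, if i.1 = i.2 then (starRingEnd ℂ) (x i) else 0)
        = ∑ a : Fin N, (starRingEnd ℂ) (x (a,a)) := by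
      rw [← Finset.sum_filter]; exact diag_filter_sum _
    have e4 : (∑ p : Fin N × Fin N, if p.1 = p.2 then (1 + (α:ℂ)) * ((starRingEnd ℂ) (x p) * x p) else 0)
        = ∑ a : Fin N, (1+(α:ℂ)) * ((starRingEnd ℂ) (x (a,a)) * x (a,a)) := by
      rw [← Finset.sum_filter]; exact diag_filter_sum _
    rw [e2, e3, e4, ← Finset.mul_sum]
    ring
  have hT3 : (∑ p : Fin N × Fin N, ∑ q : Fin N × Fin N,
        (starRingEnd ℂ) (x p) * ((if q = (p.2, p.1) ∧ p.1 ≠ p.2 then (if p.2 < p.1 then (starRingEnd ℂ) γ else γ) else 0) * x q))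
      = ∑ p ∈ Finset.univ.filter (fun p : Fin N × Fin N => p.2 < p.1),
          ((starRingEnd ℂ) γ * ((starRingEnd ℂ) (x p) * x (p.2,p.1))
            + γ * ((starRingEnd ℂ) (x (p.2,p.1)) * x p)) := by
    have e1 : ∀ p : Fin N × Fin N,
        (∑ q : Fin N × Fin N, (starRingEnd ℂ) (x p) * ((if q = (p.2, p.1) ∧ p.1 ≠ p.2 then (if p.2 < p.1 then (starRingEnd ℂ) γ else γ) else 0) * x q))
        = if p.1 ≠ p.2 then (if p.2 < p.1 then (starRingEnd ℂ) γ else γ) * ((starRingEnd ℂ) (x p) * x (p.2,p.1)) else 0 := by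
      intro p
      rw [Finset.sum_eq_single (p.2, p.1)]
      · by_cases h : p.1 = p.2 <;> simp [h] <;> ring
      · intro q _ hq; rw [if_neg (fun h => hq h.1)]; ring
      · intro h; exact absurd (Finset.mem_univ _) h
    rw [Finset.sum_congr rfl fun p _ => e1 p, Finset.sum_ite, Finset.sum_const_zero, add_zero]
    have := offdiag_split (fun p : Fin N × Fin N =>
      (if p.2 < p.1 then (starRingEnd ℂ) γ else γ) * ((starRingEnd ℂ) (x p) * x (p.2,p.1)))
    simp only [ne_eq] at this
    rw [this]
    refine Finset.sum_congr rfl fun p hp => ?_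
    have hlt : p.2 < p.1 := (Finset.mem_filter.mp hp).2
    rw [if_pos hlt, if_neg (by omega : ¬ p.1 < p.2)]
  rw [h0]
  simp only [Finset.sum_add_distrib]
  rw [hT1, hT2, hT3, ← Finset.sum_add_distrib]
  ring

lemma choi_isHermitian {N : ℕ} (ε α : ℝ) (γ : ℂ) :
    (choiMatrix (N := N) (faultyMap ε α γ)).IsHermitian := by
  ext p q
  rw [Matrix.conjTranspose_apply, choi_apply, choi_apply]
  have e1 : ∀ (c : Prop) [Decidable c] (z : ℂ), star (if c then z else 0) = if c then star z else 0 := by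
    intros c _ z; split <;> simp
  rw [star_add, star_add, e1, e1, e1]
  congr 1
  · congr 1
    · by_cases h : q = p
      · subst h
        simp [apply_ite (starRingEnd ℂ), Complex.conj_ofReal]
      · rw [if_neg h, if_neg (fun hh => h hh.symm)]
    · by_cases h : q.1 = q.2 ∧ p.1 = p.2 ∧ q ≠ p
      · rw [if_pos h, if_pos ⟨h.2.1, h.1, fun hh => h.2.2 hh.symm⟩]
        simp [Complex.ext_iff]
      · rw [if_neg h, if_neg (fun hh => h ⟨hh.2.1, hh.1, fun h2 => hh.2.2 h2.symm⟩)]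
  · by_cases h : p = (q.2, q.1) ∧ q.1 ≠ q.2
    · obtain ⟨hp, hne⟩ := h
      subst hp
      rcases lt_or_gt_of_ne hne with hlt | hlt
      · simp [hne, Ne.symm hne, hlt, asymm hlt]
      · simp [hne, Ne.symm hne, hlt, asymm hlt]
    · rw [if_neg h, if_neg (fun hh => h ⟨by simp [hh.1], fun hc => hh.2 (by rw [hh.1] at hc; simpa using hc.symm)⟩)]

lemma trace_pres {N : ℕ} (hN : 2 ≤ N) (ε α : ℝ) (γ : ℂ)
    (ρ : Matrix (Fin N) (Fin N) ℂ) : (faultyMap ε α γ ρ).trace = ρ.trace := by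
  have hN1 : ((N:ℝ) - 1) ≠ 0 := by
    have : (2:ℝ) ≤ N := by exact_mod_cast hN
    linarith
  simp only [Matrix.trace, Matrix.diag, faultyMap, Matrix.of_apply, eq_self_iff_true, if_true]
  rw [Finset.sum_add_distrib]
  have h1 : ∑ μ : Fin N, ((1 - ε : ℝ) : ℂ) * ρ μ μ = ((1-ε:ℝ):ℂ) * ∑ μ, ρ μ μ := by
    rw [Finset.mul_sum]
  have h2 : ∑ μ : Fin N, ((ε / ((N : ℝ) - 1) : ℝ) : ℂ) * ∑ ν' ∈ Finset.univ.filter (· ≠ μ), ρ ν' ν'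
      = ((ε / ((N : ℝ) - 1) : ℝ) : ℂ) * (((N:ℝ) - 1 : ℝ) * ∑ μ, ρ μ μ) := by
    rw [← Finset.mul_sum]
    congr 1
    have : ∀ μ : Fin N, ∑ ν' ∈ Finset.univ.filter (· ≠ μ), ρ ν' ν'
        = (∑ ν', ρ ν' ν') - ρ μ μ := by
      intro μ
      rw [← Finset.sum_filter_add_sum_filter_not Finset.univ (· ≠ μ) (fun ν' => ρ ν' ν')]
      simp only [ne_eq, not_not, Finset.filter_eq', Finset.mem_univ, if_pos, Finset.sum_singleton]
      ring
    rw [Finset.sum_congr rfl fun μ _ => this μ, Finset.sum_sub_distrib, Finset.sum_const,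
      Finset.card_univ, Fintype.card_fin, nsmul_eq_mul]
    push_cast
    ring
  rw [h1, h2, ← mul_assoc, ← Complex.ofReal_mul, div_mul_cancel₀ _ hN1]
  rw [← add_mul, ← Complex.ofReal_add]
  norm_num

/-- If `α ∈ [(ε-N)/(N-1), -ε]` and `|γ| ≤ ε/(N-1)` then `Λ_{ε,γ}` is CPTP:
its Choi matrix is positive semidefinite and it is trace preserving. -/
theorem stmt10 {N : ℕ} (hN : 2 ≤ N) (ε α : ℝ) (γ : ℂ) (hε : ε ∈ Set.Icc (0 : ℝ) 1)
    (hαi : α ∈ Set.Icc ((ε - N) / ((N : ℝ) - 1)) (-ε))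
    (hγ : ‖γ‖ ≤ ε / ((N : ℝ) - 1)) :
    (choiMatrix (faultyMap (N := N) ε α γ)).PosSemidef ∧
      ∀ ρ : Matrix (Fin N) (Fin N) ℂ, (faultyMap ε α γ ρ).trace = ρ.trace := by
  obtain ⟨hε0, hε1⟩ := hε
  obtain ⟨hα1, hα2⟩ := hαi
  have hN2 : (2:ℝ) ≤ (N:ℝ) := by exact_mod_cast hN
  have hN1pos : (0:ℝ) < (N:ℝ) - 1 := by linarith
  refine ⟨Matrix.posSemidef_iff_dotProduct_mulVec.mpr ⟨choi_isHermitian ε α γ, ?_⟩, fun ρ => trace_pres hN ε α γ ρ⟩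
  intro x
  rw [quad_form]
  have key : ∀ z : ℂ, (starRingEnd ℂ) z * z = ((Complex.normSq z : ℝ) : ℂ) := fun z => by
    rw [mul_comm, Complex.mul_conj]
  set T : ℝ := ∑ a : Fin N, Complex.normSq (x (a,a)) with hT_def
  set S : ℂ := ∑ a : Fin N, x (a,a) with hS_def
  have hCS : (∑ a : Fin N, (starRingEnd ℂ) (x (a,a))) = (starRingEnd ℂ) S := (map_sum _ _ _).symm
  have h1 : (∑ a : Fin N, ((1 - ε : ℝ):ℂ) * ((starRingEnd ℂ) (x (a,a)) * x (a,a)))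
      = (((1 - ε) * T : ℝ) : ℂ) := by
    push_cast [hT_def, Finset.mul_sum]
    exact Finset.sum_congr rfl fun a _ => by rw [key]
  have h2 : (1 + (α:ℂ)) * ((∑ a : Fin N, (starRingEnd ℂ) (x (a,a))) * S
        - ∑ a : Fin N, (starRingEnd ℂ) (x (a,a)) * x (a,a))
      = (((1 + α) * (Complex.normSq S - T) : ℝ) : ℂ) := by
    have hTc : (∑ a : Fin N, (starRingEnd ℂ) (x (a,a)) * x (a,a)) = ((T:ℝ):ℂ) := by
      push_cast [hT_def]
      exact Finset.sum_congr rfl fun a _ => by rw [key]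
    rw [hCS, key S, hTc]
    push_cast
    ring
  have h3 : (∑ p ∈ Finset.univ.filter (fun p : Fin N × Fin N => p.2 < p.1),
        ( ((ε / ((N:ℝ)-1) : ℝ) : ℂ) * ((starRingEnd ℂ) (x p) * x p
            + (starRingEnd ℂ) (x (p.2,p.1)) * x (p.2,p.1))
          + ((starRingEnd ℂ) γ * ((starRingEnd ℂ) (x p) * x (p.2,p.1))
            + γ * ((starRingEnd ℂ) (x (p.2,p.1)) * x p)) ))
      = ((∑ p ∈ Finset.univ.filter (fun p : Fin N × Fin N => p.2 < p.1),
          (ε / ((N:ℝ)-1) * (Complex.normSq (x p) + Complex.normSq (x (p.2,p.1)))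
            + 2 * (γ * ((starRingEnd ℂ) (x (p.2,p.1)) * x p)).re) : ℝ) : ℂ) := by
    push_cast
    refine Finset.sum_congr rfl fun p _ => ?_
    rw [key, key]
    have hw : (starRingEnd ℂ) γ * ((starRingEnd ℂ) (x p) * x (p.2,p.1))
          + γ * ((starRingEnd ℂ) (x (p.2,p.1)) * x p)
        = (γ * ((starRingEnd ℂ) (x (p.2,p.1)) * x p))
          + (starRingEnd ℂ) (γ * ((starRingEnd ℂ) (x (p.2,p.1)) * x p)) := by
      simp only [_root_.map_mul, Complex.conj_conj]
      ring
    rw [hw, Complex.add_conj]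
    push_cast
    ring
  rw [h1, h2, h3, ← Complex.ofReal_add, ← Complex.ofReal_add]
  rw [Complex.zero_le_real]
  have hT0 : 0 ≤ T := Finset.sum_nonneg fun a _ => Complex.normSq_nonneg _
  have hS0 : 0 ≤ Complex.normSq S := Complex.normSq_nonneg _
  have hCS2 : Complex.normSq S ≤ (N:ℝ) * T := by
    have e1 : Complex.normSq S = ‖S‖ ^ 2 := (Complex.sq_norm S).symm
    have e2 : ‖S‖ ≤ ∑ a : Fin N, ‖x (a,a)‖ :=
      norm_sum_le _ _
    have e3 : (∑ a : Fin N, ‖x (a,a)‖) ^ 2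
        ≤ (N:ℝ) * ∑ a : Fin N, ‖x (a,a)‖ ^ 2 := by
      have := sq_sum_le_card_mul_sum_sq (s := (Finset.univ : Finset (Fin N)))
        (f := fun a => ‖x (a,a)‖)
      simpa using this
    have e4 : (∑ a : Fin N, ‖x (a,a)‖ ^ 2) = T := by
      rw [hT_def]
      exact Finset.sum_congr rfl fun a _ => Complex.sq_norm _
    calc Complex.normSq S = ‖S‖ ^ 2 := e1
      _ ≤ (∑ a : Fin N, ‖x (a,a)‖) ^ 2 := by
          apply pow_le_pow_left₀ (norm_nonneg _) e2
      _ ≤ (N:ℝ) * ∑ a : Fin N, ‖x (a,a)‖ ^ 2 := e3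
      _ = (N:ℝ) * T := by rw [e4]
  have hb2 : 0 ≤ (N:ℝ) - ε + ((N:ℝ)-1) * α := by
    have := (div_le_iff₀ hN1pos).mp hα1
    linarith
  have hdiag : 0 ≤ (1 - ε) * T + (1 + α) * (Complex.normSq S - T) := by
    by_cases hb : 0 ≤ 1 + α
    · nlinarith
    · push_neg at hb
      nlinarith [mul_le_mul_of_nonpos_left hCS2 (le_of_lt hb)]
  have hoff : 0 ≤ ∑ p ∈ Finset.univ.filter (fun p : Fin N × Fin N => p.2 < p.1),
      (ε / ((N:ℝ)-1) * (Complex.normSq (x p) + Complex.normSq (x (p.2,p.1)))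
        + 2 * (γ * ((starRingEnd ℂ) (x (p.2,p.1)) * x p)).re) := by
    refine Finset.sum_nonneg fun p _ => ?_
    set u : ℂ := x p
    set v : ℂ := x (p.2, p.1)
    have hre : |(γ * ((starRingEnd ℂ) v * u)).re| ≤ ‖γ * ((starRingEnd ℂ) v * u)‖ :=
      Complex.abs_re_le_norm _
    have habs : ‖γ * ((starRingEnd ℂ) v * u)‖
        = ‖γ‖ * (‖v‖ * ‖u‖) := by
      simp [norm_mul, Complex.norm_conj]
    have hc0 : 0 ≤ ε / ((N:ℝ)-1) := le_trans (norm_nonneg γ) hγ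
    have hmul : ‖γ‖ * (‖v‖ * ‖u‖)
        ≤ ε / ((N:ℝ)-1) * (‖v‖ * ‖u‖) :=
      mul_le_mul_of_nonneg_right hγ (mul_nonneg (norm_nonneg _) (norm_nonneg _))
    have h1 := abs_le.mp hre
    nlinarith [sq_nonneg (‖u‖ - ‖v‖), Complex.sq_norm u, Complex.sq_norm v,
      mul_nonneg hc0 (sq_nonneg (‖u‖ - ‖v‖))]
  linarith
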